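/- If a real quadratic irrational w has purely periodic '−' continued fraction expansion w = (b₀, ..., b_r repeated), then 1/w̃ has '−' continued fraction expansion (b_r, ..., b₀ repeated), where w̃ is the Galois conjugate of w. -/

import Mathlib

/-- Iterates of the minus continued fraction algorithm. -/
noncomputable def mIter (x : ℝ) (n : ℕ) : ℝ := (fun y => ((⌈y⌉ : ℝ) - y)⁻¹)^[n] x

/-- The n-th partial quotient of the minus continued fraction of x. -/
noncomputable def mDigit (x : ℝ) (n : ℕ) : ℤ := ⌈mIter x n⌉

namespace MCFaux

lemma mIter_add (x : ℝ) (m n : ℕ) : mIter x (n + m) = mIter (mIter x m) n :=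
  Function.iterate_add_apply _ _ _ _


lemma mIter_succ (x : ℝ) (n : ℕ) :
    mIter x (n + 1) = ((mDigit x n : ℝ) - mIter x n)⁻¹ := by
  simp [mIter, mDigit, Function.iterate_succ_apply']

lemma mIter_irrational {x : ℝ} (hx : Irrational x) (n : ℕ) : Irrational (mIter x n) := by
  induction n with
  | zero => exact hx
  | succ n ih => rw [mIter_succ]; exact ((ih.intCast_sub _).inv)

lemma mIter_one_lt {x : ℝ} (hx : Irrational x) (n : ℕ) : 1 < mIter x (n + 1) := by
  have hi := mIter_irrational hx n
  rw [mIter_succ]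
  have h1 : (mDigit x n : ℝ) - mIter x n < 1 := by
    have := Int.ceil_lt_add_one (mIter x n); simp only [mDigit]; linarith
  have h0 : 0 < (mDigit x n : ℝ) - mIter x n := by
    have h := Int.le_ceil (mIter x n)
    have hne : (mDigit x n : ℝ) ≠ mIter x n := fun h' => (hi.ne_int _ h'.symm)
    simp only [mDigit]
    rcases lt_or_eq_of_le h with h | h
    · linarith
    · exact absurd h.symm hne
  exact (one_lt_inv_iff₀).2 ⟨h0, h1⟩

lemma digit_ge_two {x : ℝ} (hx : Irrational x) (n : ℕ) : 2 ≤ mDigit x (n + 1) := by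
  have h := mIter_one_lt hx n
  show (2:ℤ) ≤ ⌈mIter x (n+1)⌉
  have : (1 : ℤ) < ⌈mIter x (n+1)⌉ := by
    exact_mod_cast lt_of_lt_of_le h (Int.le_ceil _)
  omega

lemma inv_succ {x : ℝ} (n : ℕ) :
    (mIter x (n + 1))⁻¹ = (mDigit x n : ℝ) - mIter x n := by
  rw [mIter_succ, inv_inv]

lemma prod_pos {x : ℝ} (hx : Irrational x) (n : ℕ) :
    0 < ∏ k ∈ Finset.range n, mIter x (k+1) :=
  Finset.prod_pos fun k _ => lt_trans one_pos (mIter_one_lt hx k)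

lemma prod_lower {x : ℝ} (hx : Irrational x) (n : ℕ) :
    1 + n * (mIter x n - 1) ≤ ∏ k ∈ Finset.range n, mIter x (k+1) := by
  induction n with
  | zero => simp
  | succ n ih =>
    rw [Finset.prod_range_succ]
    have hx1 : 1 < mIter x (n+1) := mIter_one_lt hx n
    have hQpos : 0 < ∏ k ∈ Finset.range n, mIter x (k+1) := prod_pos hx n
    cases n with
    | zero => simp
    | succ m =>
      -- digit of x at index m+1 is ≥ 2
      have hc : (2:ℝ) ≤ (mDigit x (m+1) : ℝ) := by exact_mod_cast digit_ge_two hx m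
      have hne : mIter x (m+1+1) ≠ 0 := by positivity
      have hmul : mIter x (m+1) * mIter x (m+1+1) = (mDigit x (m+1) : ℝ) * mIter x (m+1+1) - 1 := by
        have h := inv_succ (x := x) (m+1)
        field_simp at h
        linarith [h]
      have hx0 : 1 < mIter x (m+1) := mIter_one_lt hx m
      push_cast
      push_cast at ih
      set Q := ∏ k ∈ Finset.range (m+1), mIter x (k+1)
      set X' := mIter x (m+1+1)
      set Xm := mIter x (m+1)
      have hX'0 : (0:ℝ) ≤ X' := by linarith
      have e1 : (1 + ((m:ℝ)+1)*(Xm-1)) * X' ≤ Q * X' :=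
        mul_le_mul_of_nonneg_right ih hX'0
      have e3 : Xm * X' - X' ≥ X' - 1 := by
        nlinarith [mul_nonneg (show (0:ℝ) ≤ (mDigit x (m+1):ℝ) - 2 by linarith) hX'0]
      have e4 : ((m:ℝ)+1) * (Xm*X' - X') ≥ ((m:ℝ)+1) * (X' - 1) :=
        mul_le_mul_of_nonneg_left e3 (by positivity)
      nlinarith [e1, e4]

lemma tele {x y : ℝ} (hd : ∀ n, mDigit x n = mDigit y n)
    (hx : Irrational x) (hy : Irrational y) (n : ℕ) :
    |x - y| * ∏ k ∈ Finset.range n, (mIter x (k+1) * mIter y (k+1))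
      = |mIter x n - mIter y n| := by
  induction n with
  | zero => simp [mIter]
  | succ n ih =>
    rw [Finset.prod_range_succ, ← mul_assoc, ih]
    have hx1 : 1 < mIter x (n+1) := mIter_one_lt hx n
    have hy1 : 1 < mIter y (n+1) := mIter_one_lt hy n
    have hxne : mIter x (n+1) ≠ 0 := by positivity
    have hyne : mIter y (n+1) ≠ 0 := by positivity
    have hX := inv_succ (x := x) n
    have hY := inv_succ (x := y) n
    have hkey : (mIter x n - mIter y n) * (mIter x (n+1) * mIter y (n+1))
        = mIter x (n+1) - mIter y (n+1) := by
      have hxn : mIter x n = (mDigit x n : ℝ) - (mIter x (n+1))⁻¹ := by rw [hX]; ring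
      have hyn : mIter y n = (mDigit y n : ℝ) - (mIter y (n+1))⁻¹ := by rw [hY]; ring
      rw [hxn, hyn, hd n]
      field_simp
      ring
    rw [← abs_of_pos (show (0:ℝ) < mIter x (n+1) * mIter y (n+1) by positivity), ← abs_mul, hkey]

lemma uniq {x y : ℝ} (hx : Irrational x) (hy : Irrational y)
    (hd : ∀ n, mDigit x n = mDigit y n) : x = y := by
  have key : ∀ n : ℕ, |x - y| * (n+1 : ℝ) ≤ 2 := by
    intro n
    set N := n + 1 with hN
    have hX1 : 1 < mIter x N := mIter_one_lt hx n
    have hY1 : 1 < mIter y N := mIter_one_lt hy n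
    have hQ := prod_lower hx N
    have hR := prod_lower hy N
    have hQpos := prod_pos hx N
    have hRpos := prod_pos hy N
    have ht := tele hd hx hy N
    rw [Finset.prod_mul_distrib] at ht
    set Q := ∏ k ∈ Finset.range N, mIter x (k+1)
    set R := ∏ k ∈ Finset.range N, mIter y (k+1)
    have habs : |mIter x N - mIter y N| ≤ (mIter x N - 1) + (mIter y N - 1) := by
      rw [abs_le]; constructor <;> linarith
    have hE : 0 ≤ |x - y| := abs_nonneg _
    have hNcast : (1:ℝ) ≤ (N:ℝ) := by exact_mod_cast Nat.one_le_iff_ne_zero.2 (by omega)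
    -- |x-y| * Q * R ≤ (X-1)+(Y-1), N(X-1) ≤ Q-1, N(Y-1) ≤ R-1, Q,R ≥ 1
    have hQ1 : (1:ℝ) ≤ Q := by nlinarith
    have hR1 : (1:ℝ) ≤ R := by nlinarith
    have h1 : |x - y| * (Q * R) ≤ (mIter x N - 1) + (mIter y N - 1) := le_of_eq_of_le ht habs
    have h2 : (N:ℝ) * (mIter x N - 1) ≤ Q - 1 := by nlinarith
    have h3 : (N:ℝ) * (mIter y N - 1) ≤ R - 1 := by nlinarith
    have hgoal : |x - y| * (N:ℝ) * (Q * R) ≤ 2 * (Q * R) := by nlinarith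
    have : (0:ℝ) < Q * R := by positivity
    have := (mul_le_mul_iff_of_pos_right this).1 hgoal
    exact_mod_cast this
  by_contra h
  have h0 : 0 < |x - y| := abs_pos.2 (sub_ne_zero.2 h)
  obtain ⟨n, hn⟩ := exists_nat_gt (2 / |x - y|)
  have hkn := key n
  have hnn : 2 / |x - y| < (n:ℝ) + 1 := lt_trans hn (by linarith)
  have : 2 < |x - y| * ((n:ℝ)+1) := by
    rw [div_lt_iff₀ h0] at hnn; linarith [hnn]
  linarith


/-- The conjugate orbit: v 0 = wt, v (n+1) = (B n - v n)⁻¹. -/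
noncomputable def conjSeq (wt : ℝ) (B : ℕ → ℤ) : ℕ → ℝ
  | 0 => wt
  | n + 1 => ((B n : ℝ) - conjSeq wt B n)⁻¹

lemma conjSeq_zero (wt : ℝ) (B : ℕ → ℤ) : conjSeq wt B 0 = wt := rfl

lemma conjSeq_succ (wt : ℝ) (B : ℕ → ℤ) (n : ℕ) :
    conjSeq wt B (n + 1) = ((B n : ℝ) - conjSeq wt B n)⁻¹ := rfl

end MCFaux

open MCFaux in
theorem stmt_10 (w : ℝ) (hw : Irrational w) (a b c : ℤ) (ha : a ≠ 0)
    (hq : (a : ℝ) * w ^ 2 + (b : ℝ) * w + (c : ℝ) = 0)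
    (r : ℕ) (bs : ℕ → ℤ)
    (hper : ∀ i, mDigit w i = bs (i % (r + 1))) :
    ∀ i, mDigit ((-(b : ℝ) / (a : ℝ) - w)⁻¹) i = bs (r - i % (r + 1)) := by
  have ha' : (a : ℝ) ≠ 0 := Int.cast_ne_zero.2 ha
  set m := r + 1 with hm
  have hm0 : 0 < m := Nat.succ_pos r
  set B : ℕ → ℤ := fun n => bs (n % m) with hBdef
  have hB : ∀ n, mDigit w n = B n := hper
  have hBper : ∀ n, B (n + m) = B n := by
    intro n; simp only [hBdef, Nat.add_mod_right]
  have hB2 : ∀ n, 2 ≤ B n := by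
    intro n
    have h1 : B n = mDigit w (n % m + m) := by
      rw [hB (n % m + m)]
      show bs (n % m) = bs ((n % m + m) % m)
      rw [Nat.add_mod_right, Nat.mod_mod_of_dvd _ dvd_rfl]
    rw [h1, show n % m + m = (n % m + r) + 1 by omega]
    exact digit_ge_two hw _
  -- periodicity of the w-orbit
  have hdig_shift : ∀ n, mDigit (mIter w m) n = mDigit w n := by
    intro n
    show ⌈mIter (mIter w m) n⌉ = mDigit w n
    rw [← mIter_add, show (⌈mIter w (n + m)⌉ : ℤ) = mDigit w (n + m) from rfl,
      hB (n + m), hB n, hBper]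
  have hwper : mIter w m = w :=
    uniq (mIter_irrational hw m) hw hdig_shift
  -- the conjugate
  set wt : ℝ := -(b : ℝ) / (a : ℝ) - w with hwt
  have hwt_irr : Irrational wt := by
    set q0 : ℚ := -b / a with hq0def
    have h1 : wt = (q0 : ℝ) - w := by rw [hwt, hq0def]; push_cast; ring
    rw [h1]; exact hw.ratCast_sub _
  have hwtw : w = -(b : ℝ) / (a : ℝ) - wt := by rw [hwt]; ring
  have hsum : w + wt = -(b : ℝ) / (a : ℝ) := by rw [hwt]; ring
  have hprod : w * wt = (c : ℝ) / (a : ℝ) := by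
    rw [hwt, div_sub' ha', ← mul_div_assoc, div_eq_div_iff ha' ha']
    linear_combination -(a:ℝ) * hq
  set v : ℕ → ℝ := conjSeq wt B with hv
  have hvrec : ∀ n, v (n + 1) = ((B n : ℝ) - v n)⁻¹ := fun n => rfl
  -- the conjugation invariant
  have hinv : ∀ n, ∃ p q : ℚ, q ≠ 0 ∧ mIter w n = (p : ℝ) + (q : ℝ) * w ∧
      v n = (p : ℝ) + (q : ℝ) * wt := by
    intro n
    induction n with
    | zero =>
      refine ⟨0, 1, one_ne_zero, ?_, ?_⟩
      · show w = ((0:ℚ):ℝ) + ((1:ℚ):ℝ) * w; norm_num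
      · show wt = ((0:ℚ):ℝ) + ((1:ℚ):ℝ) * wt; norm_num
    | succ n ih =>
      obtain ⟨p, q, hq0, hwn, hvn⟩ := ih
      set K : ℚ := (B n : ℚ) - p with hK
      set s : ℝ := (K : ℝ) - (q : ℝ) * w with hs
      set s' : ℝ := (K : ℝ) - (q : ℝ) * wt with hs'
      have hsne : s ≠ 0 := by
        have h2 : Irrational s := by
          have := (hw.ratCast_mul hq0).ratCast_sub K
          simpa [hs] using this
        simpa using h2.ne_int 0
      have hs'ne : s' ≠ 0 := by
        have h2 : Irrational s' := by
          have := (hwt_irr.ratCast_mul hq0).ratCast_sub K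
          simpa [hs'] using this
        simpa using h2.ne_int 0
      set Dq : ℚ := K ^ 2 + K * q * ((b : ℚ) / (a : ℚ)) + q ^ 2 * ((c : ℚ) / (a : ℚ)) with hDq
      have hDrat : (Dq : ℝ) = s * s' := by
        have hexp : s * s' = (K : ℝ) ^ 2 - (K : ℝ) * (q : ℝ) * (w + wt)
            + (q : ℝ) ^ 2 * (w * wt) := by rw [hs, hs']; ring
        rw [hexp, hsum, hprod, hDq]
        push_cast
        ring
      have hDne : (Dq : ℝ) ≠ 0 := by rw [hDrat]; exact mul_ne_zero hsne hs'ne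
      have hDq0 : Dq ≠ 0 := fun h => hDne (by rw [h]; norm_num)
      have h2 : s⁻¹ = s' / (Dq : ℝ) := by rw [hDrat]; field_simp
      have h2' : s'⁻¹ = s / (Dq : ℝ) := by
        rw [hDrat]
        rw [eq_div_iff (mul_ne_zero hsne hs'ne)]
        field_simp
      refine ⟨(K + q * ((b : ℚ) / (a : ℚ))) / Dq, q / Dq, div_ne_zero hq0 hDq0, ?_, ?_⟩
      · have h1 : mIter w (n + 1) = s⁻¹ := by
          rw [mIter_succ, hB n, hwn]
          congr 1
          rw [hs, hK]
          push_cast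
          ring
        rw [h1, h2, hs', hwt]
        push_cast
        field_simp
        ring
      · have h1 : v (n + 1) = s'⁻¹ := by
          rw [hvrec n, hvn]
          congr 1
          rw [hs', hK]
          push_cast
          ring
        rw [h1, h2', hs, hwtw]
        push_cast
        field_simp
        ring
  have hvirr : ∀ n, Irrational (v n) := by
    intro n
    obtain ⟨p, q, hq0, _, hvn⟩ := hinv n
    rw [hvn]
    exact (hwt_irr.ratCast_mul hq0).ratCast_add p
  have hvinv : ∀ n, (v (n + 1))⁻¹ = (B n : ℝ) - v n := by
    intro n
    rw [hvrec n, inv_inv]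
  have hvper1 : v m = v 0 := by
    obtain ⟨p, q, hq0, hwm, hvm⟩ := hinv m
    rw [hwper] at hwm
    have hq1 : q = 1 := by
      by_contra hq1
      apply hw
      refine ⟨p / (1 - q), ?_⟩
      have hne : (1 - (q : ℝ)) ≠ 0 := by
        intro h
        apply hq1
        have : (q : ℝ) = 1 := by linarith
        exact_mod_cast this
      push_cast
      field_simp
      linarith [hwm]
    have hp0 : p = 0 := by
      rw [hq1] at hwm
      have : (p : ℝ) = 0 := by push_cast at hwm; linarith
      exact_mod_cast this
    rw [hvm, hq1, hp0]
    show ((0:ℚ):ℝ) + ((1:ℚ):ℝ) * wt = v 0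
    norm_num
    rfl
  have hvper : ∀ n, v (n + m) = v n := by
    intro n
    induction n with
    | zero => simpa using hvper1
    | succ n ih =>
      rw [show n + 1 + m = (n + m) + 1 by omega, hvrec (n + m), hBper, ih, ← hvrec n]
  have hvperk : ∀ k n, v (n + k * m) = v n := by
    intro k
    induction k with
    | zero => intro n; simp
    | succ k ih =>
      intro n
      rw [show n + (k + 1) * m = (n + k * m) + m by ring, hvper, ih]
  -- all v n lie in (0,1)
  have hv01 : ∀ n, 0 < v n ∧ v n < 1 := by
    by_contra hcon
    push_neg at hcon
    obtain ⟨n₀, hbad0⟩ := hcon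
    have hvne0 : ∀ n, v n ≠ 0 := fun n => by simpa using (hvirr n).ne_int 0
    have hvne1 : ∀ n, v n ≠ 1 := fun n => by simpa using (hvirr n).ne_int 1
    have hbad : v n₀ < 0 ∨ 1 < v n₀ := by
      rcases le_or_gt (v n₀) 0 with h | h
      · exact Or.inl (lt_of_le_of_ne h (hvne0 n₀))
      · exact Or.inr (lt_of_le_of_ne (hbad0 h) (Ne.symm (hvne1 n₀)))
    have hstep : ∀ n, (v (n + 1) < 0 ∨ 1 < v (n + 1)) → 1 < v n := by
      intro n hb
      have h2 : (2 : ℝ) ≤ (B n : ℝ) := by exact_mod_cast hB2 n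
      have hvn : v n = (B n : ℝ) - (v (n + 1))⁻¹ := by have h := hvinv n; linarith
      rcases hb with hb | hb
      · have : (v (n + 1))⁻¹ < 0 := inv_lt_zero.2 hb
        rw [hvn]; linarith
      · have h1 : (v (n + 1))⁻¹ < 1 := inv_lt_one_iff₀.2 (Or.inr hb)
        have h0 : 0 < (v (n + 1))⁻¹ := by positivity
        rw [hvn]; linarith
    have htrans : ∀ d n, (v (n + d) < 0 ∨ 1 < v (n + d)) → (v n < 0 ∨ 1 < v n) := by
      intro d
      induction d with
      | zero => intro n h; exact h
      | succ d ih =>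
        intro n h
        rw [show n + (d + 1) = (n + 1) + d by omega] at h
        exact Or.inr (hstep n (ih (n + 1) h))
    have hall : ∀ n, 1 < v n := by
      intro n
      apply hstep
      have hj : v (n₀ + (n + 2) * m) = v n₀ := hvperk (n + 2) n₀
      have hge : n + 1 + 1 ≤ n₀ + (n + 2) * m + 1 := by nlinarith [hm0]
      obtain ⟨d, hd⟩ : ∃ d, n₀ + (n + 2) * m = (n + 1) + d := ⟨n₀ + (n + 2) * m - (n + 1), by omega⟩
      apply htrans d
      rw [← hd, hj]
      exact hbad
    have hceilv : ∀ n, ⌈v n⌉ = B n := by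
      intro n
      have hvn : v n = (B n : ℝ) - (v (n + 1))⁻¹ := by have h := hvinv n; linarith
      have h1 : 1 < v (n + 1) := hall (n + 1)
      have hi1 : (v (n + 1))⁻¹ < 1 := inv_lt_one_iff₀.2 (Or.inr h1)
      have hi0 : 0 < (v (n + 1))⁻¹ := by positivity
      rw [Int.ceil_eq_iff]
      constructor
      · rw [hvn]; push_cast; linarith
      · rw [hvn]; linarith
    have hvmi : ∀ n, mIter (v 0) n = v n := by
      intro n
      induction n with
      | zero => rfl
      | succ n ih =>
        have hss : mIter (v 0) (n + 1) = ((⌈mIter (v 0) n⌉ : ℝ) - mIter (v 0) n)⁻¹ := by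
          simp [mIter, Function.iterate_succ_apply']
        rw [hss, ih, hceilv n, ← hvrec n]
    have hvd : ∀ n, mDigit (v 0) n = mDigit w n := by
      intro n
      show ⌈mIter (v 0) n⌉ = mDigit w n
      rw [hvmi n, hceilv n, hB n]
    have hv0w : v 0 = w := uniq (hvirr 0) hw hvd
    have e0 : -(b : ℝ) / (a : ℝ) - w = w := by rw [← hwt]; exact hv0w
    have e : -(b : ℝ) = 2 * w * (a : ℝ) := by
      field_simp at e0
      linarith
    apply hw
    refine ⟨(-b : ℚ) / (2 * a), ?_⟩
    push_cast
    rw [div_eq_iff (by intro h; exact ha' (by linarith))]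
    linarith [e]
  -- the reversed expansion
  have hceil2 : ∀ n, (⌈(v (n + 1))⁻¹⌉ : ℤ) = B n := by
    intro n
    have h1 := hvinv n
    have h0 := (hv01 n).1
    have h2 := (hv01 n).2
    rw [Int.ceil_eq_iff, h1]
    constructor
    · push_cast; linarith
    · linarith
  have hfu : ∀ n, ((⌈(v (n + 1))⁻¹⌉ : ℝ) - (v (n + 1))⁻¹)⁻¹ = (v n)⁻¹ := by
    intro n
    rw [hceil2 n, hvinv n]
    congr 1
    ring
  set u : ℝ := (-(b : ℝ) / (a : ℝ) - w)⁻¹ with hu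
  have huwt : u = (v 0)⁻¹ := rfl
  have hukey : ∀ k, k ≤ m → mIter u k = (v (m - k))⁻¹ := by
    intro k
    induction k with
    | zero =>
      intro _
      simp only [Nat.sub_zero, hvper1]
      exact huwt
    | succ k ih =>
      intro hk
      have hk' : k ≤ m := by omega
      have hss : mIter u (k + 1) = ((⌈mIter u k⌉ : ℝ) - mIter u k)⁻¹ := by
        simp [mIter, Function.iterate_succ_apply']
      rw [hss, ih hk', show m - k = (m - (k + 1)) + 1 by omega]
      exact hfu (m - (k + 1))
  have huper : mIter u m = u := by
    rw [hukey m le_rfl, Nat.sub_self, huwt]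
  have hured : ∀ t kk, mIter u (t + kk * m) = mIter u t := by
    intro t kk
    induction kk with
    | zero => simp
    | succ kk ih =>
      rw [show t + (kk + 1) * m = (t + kk * m) + m by ring, mIter_add, huper, ih]
  intro i
  have hilt : i % m < m := Nat.mod_lt i hm0
  have h1 : mIter u i = mIter u (i % m) := by
    have h := hured (i % m) (i / m)
    rw [Nat.mod_add_div'] at h
    exact h
  show ⌈mIter u i⌉ = bs (r - i % m)
  rw [h1, hukey (i % m) (le_of_lt hilt),
    show m - i % m = (r - i % m) + 1 by omega, hceil2]
  show bs ((r - i % m) % m) = bs (r - i % m)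
  congr 1
  exact Nat.mod_eq_of_lt (by omega)
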